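/- Let κ ≥ 0, â ∈ ℝ, and let α, β : ℝ → ℝ satisfy α'' = âα - 2α²β - 2κβ and β'' = âβ - 2αβ² - α/2. Then the quantity C₂(u) = (α(u)β'(u) - α'(u)β(u))² + 4(√κ·β'(u) - α'(u)/2)² + 4(α(u)β(u) - â - √κ)(α(u)/2 - √κ·β(u))² is constant in u. -/

import Mathlib

theorem stmt_5 (κ ahat : ℝ) (hκ : 0 ≤ κ) (α α' β β' : ℝ → ℝ)
    (hα : ∀ u, HasDerivAt α (α' u) u)
    (hα' : ∀ u, HasDerivAt α' (ahat * α u - 2 * (α u)^2 * β u - 2 * κ * β u) u)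
    (hβ : ∀ u, HasDerivAt β (β' u) u)
    (hβ' : ∀ u, HasDerivAt β' (ahat * β u - 2 * α u * (β u)^2 - α u / 2) u) :
    ∀ u v : ℝ,
      (α u * β' u - α' u * β u)^2 + 4 * (Real.sqrt κ * β' u - α' u / 2)^2 +
        4 * (α u * β u - ahat - Real.sqrt κ) * (α u / 2 - Real.sqrt κ * β u)^2 =
      (α v * β' v - α' v * β v)^2 + 4 * (Real.sqrt κ * β' v - α' v / 2)^2 +
        4 * (α v * β v - ahat - Real.sqrt κ) * (α v / 2 - Real.sqrt κ * β v)^2 := by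
  set s := Real.sqrt κ with hs
  have hs2 : s ^ 2 = κ := Real.sq_sqrt hκ
  intro u v
  set F : ℝ → ℝ := fun w =>
    (α w * β' w - α' w * β w)^2 + 4 * (s * β' w - α' w / 2)^2 +
      4 * (α w * β w - ahat - s) * (α w / 2 - s * β w)^2 with hF
  have key : ∀ w, HasDerivAt F 0 w := by
    intro w
    have h1 : HasDerivAt (fun w => α w * β' w - α' w * β w)
        (α' w * β' w + α w * (ahat * β w - 2 * α w * (β w)^2 - α w / 2)
          - ((ahat * α w - 2 * (α w)^2 * β w - 2 * κ * β w) * β w + α' w * β' w)) w :=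
      ((hα w).mul (hβ' w)).sub ((hα' w).mul (hβ w))
    have h2 : HasDerivAt (fun w => s * β' w - α' w / 2)
        (s * (ahat * β w - 2 * α w * (β w)^2 - α w / 2)
          - (ahat * α w - 2 * (α w)^2 * β w - 2 * κ * β w) / 2) w :=
      ((hβ' w).const_mul s).sub ((hα' w).div_const 2)
    have h3 : HasDerivAt (fun w => α w * β w - ahat - s)
        (α' w * β w + α w * β' w) w :=
      (((hα w).mul (hβ w)).sub_const ahat).sub_const s
    have h4 : HasDerivAt (fun w => α w / 2 - s * β w)
        (α' w / 2 - s * β' w) w :=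
      ((hα w).div_const 2).sub ((hβ w).const_mul s)
    have H := ((h1.pow 2).add ((h2.pow 2).const_mul 4)).add
      (((h3.mul (h4.pow 2)).const_mul 4))
    convert H using 1
    · rfl
    · rfl
    · ext x; simp only [hF, Pi.add_apply, Pi.pow_apply, Pi.mul_apply]; ring
    · rw [← hs2]; simp only [Pi.pow_apply]; ring
  have hconst : ∀ x y : ℝ, F x = F y := by
    intro x y
    have : F = fun _ => F 0 := by
      funext z
      exact is_const_of_deriv_eq_zero (fun w => (key w).differentiableAt)
        (fun w => (key w).deriv) z 0
    rw [this]
  exact hconst u v
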